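/- For every integer n ≥ 0, the determinant of the (n+1)×(n+1) matrix M_n with entries m_{i,j} = C(2j+1, i) − δ_{2j+1,i} for 0 ≤ i,j ≤ n equals the double factorial (2n+1)!! = 1·3·5⋯(2n+1). In particular M_n is invertible for every n. -/
import Mathlib
open Polynomial Finset

noncomputable def gLucas : ℕ → Polynomial ℚ
  | 0 => 1
  | 1 => 1 + 3 * X
  | (j + 2) => (1 + 2 * X) * gLucas (j + 1) - X ^ 2 * gLucas j

lemma gLucas_comp (j : ℕ) :
    (gLucas j).comp (X + X ^ 2) = (1 + X) ^ (2 * j + 1) - X ^ (2 * j + 1) := by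
  induction j using Nat.twoStepInduction with
  | zero => simp [gLucas]
  | one => simp [gLucas]; ring
  | more j ih1 ih2 =>
    have h : gLucas (j + 2) = (1 + 2 * X) * gLucas (j + 1) - X ^ 2 * gLucas j := rfl
    rw [h, sub_comp, mul_comp, mul_comp, ih1, ih2]
    have e1 : (1 + 2 * X : Polynomial ℚ).comp (X + X ^ 2) = (1 + X) ^ 2 + X ^ 2 := by
      simp; ring
    have e2 : ((X : Polynomial ℚ) ^ 2).comp (X + X ^ 2) = X ^ 2 * (1 + X) ^ 2 := by
      simp; ring
    rw [e1, e2]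
    have h1 : 2 * (j + 2) + 1 = (2 * j + 1) + 4 := by ring
    have h2 : 2 * (j + 1) + 1 = (2 * j + 1) + 2 := by ring
    rw [h1, h2]
    ring

lemma gLucas_natDegree_le (j : ℕ) : (gLucas j).natDegree ≤ j := by
  induction j using Nat.twoStepInduction with
  | zero => simp [gLucas]
  | one =>
    have h : (gLucas 1) = 1 + 3 * X := rfl
    rw [h]
    refine (natDegree_add_le _ _).trans ?_
    simp
  | more j ih1 ih2 =>
    have h : gLucas (j + 2) = (1 + 2 * X) * gLucas (j + 1) - X ^ 2 * gLucas j := rfl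
    rw [h]
    refine (natDegree_sub_le _ _).trans (max_le ?_ ?_)
    · refine (natDegree_mul_le).trans ?_
      have h1 : (1 + 2 * X : Polynomial ℚ).natDegree ≤ 1 := by
        refine (natDegree_add_le _ _).trans ?_
        simp
      omega
    · refine (natDegree_mul_le).trans ?_
      have h2 : ((X : Polynomial ℚ) ^ 2).natDegree ≤ 2 := by simp
      omega

lemma gLucas_coeff_diag (j : ℕ) : (gLucas j).coeff j = 2 * j + 1 := by
  induction j using Nat.twoStepInduction with
  | zero => simp [gLucas]
  | one =>
    have h : (gLucas 1) = 1 + 3 * X := rfl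
    rw [h]; simp [coeff_one]; norm_num
  | more j ih1 ih2 =>
    have h : gLucas (j + 2) = (1 + 2 * X) * gLucas (j + 1) - X ^ 2 * gLucas j := rfl
    rw [h]
    have hd : (gLucas (j + 1)).coeff (j + 2) = 0 :=
      coeff_eq_zero_of_natDegree_lt (lt_of_le_of_lt (gLucas_natDegree_le (j + 1)) (by omega))
    have h2c : (2 : Polynomial ℚ) = C 2 := (map_ofNat C 2).symm
    rw [coeff_sub, add_mul, one_mul, coeff_add, hd, h2c, mul_assoc, coeff_C_mul]
    have hx : ((X : Polynomial ℚ) * gLucas (j + 1)).coeff (j + 2)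
        = (gLucas (j + 1)).coeff (j + 1) := by
      rw [coeff_X_mul]
    have hx2 : ((X : Polynomial ℚ) ^ 2 * gLucas j).coeff (j + 2) = (gLucas j).coeff j :=
      coeff_X_pow_mul (gLucas j) 2 j
    rw [hx, hx2, ih2, ih1]
    push_cast
    ring

lemma prod_odd_doubleFactorial (n : ℕ) :
    ∏ j ∈ Finset.range (n + 1), (2 * j + 1) = Nat.doubleFactorial (2 * n + 1) := by
  induction n with
  | zero => simp [Nat.doubleFactorial]
  | succ n ih =>
    rw [Finset.prod_range_succ, ih, show 2 * (n + 1) + 1 = (2 * n + 1) + 2 by ring,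
      Nat.doubleFactorial_add_two]
    ring

theorem det_binomial_matrix (n : ℕ) (M : Matrix (Fin (n + 1)) (Fin (n + 1)) ℚ)
    (hM : ∀ i j : Fin (n + 1),
      M i j = ((2 * (j : ℕ) + 1).choose (i : ℕ) : ℚ) -
        if 2 * (j : ℕ) + 1 = (i : ℕ) then 1 else 0) :
    M.det = Nat.doubleFactorial (2 * n + 1) ∧ IsUnit M := by
  set L : Matrix (Fin (n + 1)) (Fin (n + 1)) ℚ :=
    fun i k => (((X : Polynomial ℚ) + X ^ 2) ^ (k : ℕ)).coeff i with hL
  set U : Matrix (Fin (n + 1)) (Fin (n + 1)) ℚ :=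
    fun k j => (gLucas (j : ℕ)).coeff k with hU
  have hfac : ∀ k : ℕ, ((X : Polynomial ℚ) + X ^ 2) ^ k = (1 + X) ^ k * X ^ k := by
    intro k
    rw [← mul_pow]; ring_nf
  have hMLU : M = L * U := by
    ext i j
    rw [hM i j, Matrix.mul_apply]
    have hdeg : (gLucas (j : ℕ)).natDegree < n + 1 :=
      lt_of_le_of_lt (gLucas_natDegree_le _) (by omega)
    have expand := Polynomial.as_sum_range' (gLucas (j : ℕ)) (n + 1) hdeg
    have key : ((1 + X : Polynomial ℚ) ^ (2 * (j : ℕ) + 1)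
        - X ^ (2 * (j : ℕ) + 1)).coeff i
        = ∑ k ∈ Finset.range (n + 1), (gLucas (j : ℕ)).coeff k
            * (((X : Polynomial ℚ) + X ^ 2) ^ k).coeff i := by
      rw [← gLucas_comp]
      conv_lhs => rw [expand]
      rw [Polynomial.sum_comp, Polynomial.finset_sum_coeff]
      refine Finset.sum_congr rfl fun k _ => ?_
      rw [← Polynomial.C_mul_X_pow_eq_monomial, Polynomial.mul_comp,
        Polynomial.C_comp, Polynomial.X_pow_comp, Polynomial.coeff_C_mul]
    have lhs_eq : ((2 * (j : ℕ) + 1).choose (i : ℕ) : ℚ) -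
        (if 2 * (j : ℕ) + 1 = (i : ℕ) then 1 else 0)
        = ((1 + X : Polynomial ℚ) ^ (2 * (j : ℕ) + 1)
            - X ^ (2 * (j : ℕ) + 1)).coeff i := by
      rw [Polynomial.coeff_sub, Polynomial.coeff_one_add_X_pow, Polynomial.coeff_X_pow]
      congr 1
      simp [eq_comm]
    have hswap : ∑ k : Fin (n + 1), L i k * U k j
        = ∑ k ∈ Finset.range (n + 1), (gLucas (j : ℕ)).coeff k
            * (((X : Polynomial ℚ) + X ^ 2) ^ k).coeff i := by
      exact (Fin.sum_univ_eq_sum_range (fun k : ℕ =>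
          (((X : Polynomial ℚ) + X ^ 2) ^ k).coeff i * (gLucas (j : ℕ)).coeff k)
          (n + 1)).trans (Finset.sum_congr rfl fun k _ => mul_comm _ _)
    rw [lhs_eq, key, hswap]
  have hLdiag : ∀ i : Fin (n + 1), L i i = 1 := by
    intro i
    rw [hL]
    simp only
    rw [hfac, Polynomial.coeff_mul_X_pow']
    simp [Polynomial.coeff_one_add_X_pow]
  have hLtri : L.BlockTriangular OrderDual.toDual := by
    intro i k h
    simp only [OrderDual.toDual_lt_toDual] at h
    rw [hL]
    simp only
    rw [hfac, Polynomial.coeff_mul_X_pow']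
    rw [if_neg (by exact_mod_cast not_le.mpr (by exact_mod_cast h))]
  have hUtri : U.BlockTriangular id := by
    intro i j h
    simp only [id] at h
    rw [hU]
    simp only
    exact Polynomial.coeff_eq_zero_of_natDegree_lt
      (lt_of_le_of_lt (gLucas_natDegree_le _) (by exact_mod_cast h))
  have hdetL : L.det = 1 := by
    rw [Matrix.det_of_lowerTriangular L hLtri]
    simp [hLdiag]
  have hdetU : U.det = Nat.doubleFactorial (2 * n + 1) := by
    rw [Matrix.det_of_upperTriangular hUtri]
    have hdiag : ∀ j : Fin (n + 1), U j j = ((2 * (j : ℕ) + 1 : ℕ) : ℚ) := by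
      intro j
      rw [hU]
      simp only
      rw [gLucas_coeff_diag]
      push_cast; ring
    calc ∏ j : Fin (n + 1), U j j
        = ∏ j : Fin (n + 1), ((2 * (j : ℕ) + 1 : ℕ) : ℚ) :=
          Finset.prod_congr rfl fun j _ => hdiag j
      _ = ((∏ j ∈ Finset.range (n + 1), (2 * j + 1) : ℕ) : ℚ) := by
          rw [Nat.cast_prod]
          exact Fin.prod_univ_eq_prod_range (fun j => ((2 * j + 1 : ℕ) : ℚ)) (n + 1)
      _ = _ := by rw [prod_odd_doubleFactorial]
  have hdet : M.det = Nat.doubleFactorial (2 * n + 1) := by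
    rw [hMLU, Matrix.det_mul, hdetL, hdetU, one_mul]
  refine ⟨hdet, ?_⟩
  rw [Matrix.isUnit_iff_isUnit_det, hdet, isUnit_iff_ne_zero]
  exact_mod_cast Nat.cast_ne_zero.mpr (Nat.doubleFactorial_pos _).ne'
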